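/- If V is a finite-dimensional Euclidean Jordan algebra with trace inner product (v|w) = tr(v∘w), then every derivation D of V satisfies Tr(D²) ≤ 0, with equality only if D = 0. -/

import Mathlib

/-- In a finite-dimensional Euclidean Jordan algebra (trace form
`(v|w) = tr(v∘w) = Tr(L_{v∘w})` positive definite), every derivation `D`
satisfies `Tr(D²) ≤ 0`, with equality only if `D = 0`. -/
theorem stmt14 (V : Type*) [AddCommGroup V] [Module ℝ V] [FiniteDimensional ℝ V]
    (mul : V →ₗ[ℝ] V →ₗ[ℝ] V)
    (comm : ∀ x y : V, mul x y = mul y x)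
    (jordan : ∀ x y : V, mul (mul x x) (mul x y) = mul x (mul (mul x x) y))
    (hpos : ∀ v : V, v ≠ 0 → 0 < LinearMap.trace ℝ V (mul (mul v v)))
    (D : V →ₗ[ℝ] V)
    (hD : ∀ x y : V, D (mul x y) = mul (D x) y + mul x (D y)) :
    LinearMap.trace ℝ V (D ∘ₗ D) ≤ 0 ∧
    (LinearMap.trace ℝ V (D ∘ₗ D) = 0 → D = 0) := by
  classical
  set B : V → V → ℝ := fun x y => LinearMap.trace ℝ V (mul (mul x y)) with hB
  -- B is symmetric
  have hBsymm : ∀ x y, B x y = B y x := fun x y => by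
    show LinearMap.trace ℝ V (mul (mul x y)) = LinearMap.trace ℝ V (mul (mul y x))
    rw [comm]
  -- tr(L_{Dz}) = 0 since L_{Dz} = [D, L_z]
  have htr0 : ∀ z : V, LinearMap.trace ℝ V (mul (D z)) = 0 := by
    intro z
    have hcomm : mul (D z) = D ∘ₗ mul z - mul z ∘ₗ D := by
      ext y
      simp only [LinearMap.sub_apply, LinearMap.comp_apply]
      rw [hD z y]
      abel
    rw [hcomm, map_sub, LinearMap.trace_comp_comm', sub_self]
  -- skewness of D w.r.t. B
  have hskew : ∀ x y, B (D x) y = - B x (D y) := by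
    intro x y
    have h1 : mul (D (mul x y)) = mul (mul (D x) y) + mul (mul x (D y)) := by
      rw [hD x y, map_add]
    have := htr0 (mul x y)
    rw [h1, map_add] at this
    simp only [hB]
    linarith
  -- positivity
  have hBpos : ∀ v : V, v ≠ 0 → 0 < B v v := hpos
  -- build inner product structure from B
  letI c : InnerProductSpace.Core ℝ V :=
    { inner := B
      conj_inner_symm := fun x y => by simpa using hBsymm y x
      re_inner_nonneg := fun x => by
        rcases eq_or_ne x 0 with h | h
        · simp [hB, h]
        · exact le_of_lt (by simpa using hBpos x h)
      add_left := fun x y z => by simp [hB, map_add]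
      smul_left := fun x y r => by simp [hB, map_smul]
      definite := fun x hx => by
        by_contra h
        exact absurd (by simpa using hx) (ne_of_gt (hBpos x h)) }
  letI : NormedAddCommGroup V := c.toNormedAddCommGroup
  letI : InnerProductSpace ℝ V := InnerProductSpace.ofCore c.toCore
  have hinner : ∀ x y : V, (inner ℝ x y : ℝ) = B x y := fun _ _ => rfl
  obtain ⟨n, b⟩ : ∃ n, Nonempty (OrthonormalBasis (Fin n) ℝ V) :=
    ⟨_, ⟨stdOrthonormalBasis ℝ V⟩⟩
  obtain ⟨b⟩ := b
  -- trace formula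
  have htrace : ∀ T : V →ₗ[ℝ] V,
      LinearMap.trace ℝ V T = ∑ i, (inner ℝ (b i) (T (b i)) : ℝ) := by
    intro T
    rw [LinearMap.trace_eq_matrix_trace ℝ b.toBasis, Matrix.trace]
    congr 1
    ext i
    rw [Matrix.diag_apply, LinearMap.toMatrix_apply, OrthonormalBasis.coe_toBasis,
      OrthonormalBasis.coe_toBasis_repr_apply, OrthonormalBasis.repr_apply_apply]
  have key : LinearMap.trace ℝ V (D ∘ₗ D) = -∑ i, B (D (b i)) (D (b i)) := by
    rw [htrace, ← Finset.sum_neg_distrib]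
    congr 1; ext i
    simp only [LinearMap.comp_apply]
    rw [hinner]
    linarith [hskew (b i) (D (b i))]
  have hterm : ∀ i, 0 ≤ B (D (b i)) (D (b i)) := by
    intro i
    rcases eq_or_ne (D (b i)) 0 with h | h
    · simp [hB, h]
    · exact le_of_lt (hBpos _ h)
  constructor
  · rw [key]
    simp only [neg_nonpos]
    exact Finset.sum_nonneg fun i _ => hterm i
  · intro h0
    rw [key, neg_eq_zero] at h0
    have hzero : ∀ i ∈ Finset.univ, B (D (b i)) (D (b i)) = 0 :=
      (Finset.sum_eq_zero_iff_of_nonneg fun i _ => hterm i).mp h0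
    have hDb : ∀ i, D (b i) = 0 := by
      intro i
      by_contra h
      exact absurd (hzero i (Finset.mem_univ i)) (ne_of_gt (hBpos _ h))
    apply b.toBasis.ext
    intro i
    simp [hDb i]
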